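/- There exists a universal constant c > 0 such that for every n ≥ 2, every integer k with 1 ≤ k ≤ n−1, and every finite set P ⊆ ℝⁿ with |x| ≤ n for all x ∈ P and cardinality at most n^{k/2 + 5}, the convex hull K = conv(P) satisfies vol_n(K)^{1/n} ≤ c · √( k · log(n) ). -/

import Mathlib

open MeasureTheory Finset

variable {E : Type*} [NormedAddCommGroup E] [InnerProductSpace ℝ E]

-- weight sum over function space
lemma wsum (P : Finset E) (w : E → ℝ) (hw1 : ∑ i ∈ P, w i = 1) (m : ℕ) :
    ∑ f : Fin m → {x // x ∈ P}, ∏ j, w (f j) = 1 := by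
  induction m with
  | zero => simp
  | succ m ih =>
    rw [← (Fin.consEquiv (fun _ : Fin (m+1) => {x // x ∈ P})).sum_comp, Fintype.sum_prod_type]
    have : ∑ a : {x // x ∈ P}, w a = 1 := by
      rw [← hw1]; exact P.sum_coe_sort w
    calc ∑ a : {x // x ∈ P}, ∑ g : Fin m → {x // x ∈ P},
          ∏ j, w (((Fin.consEquiv (fun _ : Fin (m+1) => {x // x ∈ P})) (a, g)) j)
        = ∑ a : {x // x ∈ P}, ∑ g : Fin m → {x // x ∈ P}, w a * ∏ j, w (g j) := by
          refine Finset.sum_congr rfl fun a _ => Finset.sum_congr rfl fun g _ => ?_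
          rw [Fin.prod_univ_succ]
          simp [Fin.consEquiv]
      _ = 1 := by
          simp_rw [← Finset.mul_sum, ih, mul_one, this]

open RealInnerProductSpace in
lemma maurey_exp (P : Finset E) (w : E → ℝ) (hw1 : ∑ i ∈ P, w i = 1) (z : E)
    (hz : ∑ i ∈ P, w i • i = z) (m : ℕ) :
    ∑ f : Fin m → {x // x ∈ P}, (∏ j, w (f j)) * ‖(∑ j, (f j : E)) - (m : ℝ) • z‖ ^ 2
      = m * ∑ i ∈ P, w i * ‖i - z‖ ^ 2 := by
  have hsubw : ∑ a : {x // x ∈ P}, w a = 1 := by rw [← hw1]; exact P.sum_coe_sort w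
  have hcenter : ∑ a : {x // x ∈ P}, w a • ((a : E) - z) = 0 := by
    have h1 : ∑ a : {x // x ∈ P}, w a • (a : E) = z := by
      rw [← hz]; exact P.sum_coe_sort (fun i => w i • i)
    simp_rw [smul_sub, Finset.sum_sub_distrib, h1, ← Finset.sum_smul, hsubw, one_smul, sub_self]
  induction m with
  | zero => simp
  | succ m ih =>
    push_cast
    rw [← (Fin.consEquiv (fun _ : Fin (m+1) => {x // x ∈ P})).sum_comp, Fintype.sum_prod_type]
    have key : ∀ (a : {x // x ∈ P}) (g : Fin m → {x // x ∈ P}),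
        (∏ j, w (((Fin.consEquiv (fun _ : Fin (m+1) => {x // x ∈ P})) (a, g)) j)) *
          ‖(∑ j, ((((Fin.consEquiv (fun _ : Fin (m+1) => {x // x ∈ P})) (a, g)) j : E))) - ((m : ℝ) + 1) • z‖ ^ 2
        = (w a * ∏ j, w (g j)) *
            (‖(∑ j, (g j : E)) - (m : ℝ) • z‖ ^ 2
              + 2 * ⟪(∑ j, (g j : E)) - (m : ℝ) • z, (a : E) - z⟫
              + ‖(a : E) - z‖ ^ 2) := by
      intro a g
      have hprod : (∏ j, w (((Fin.consEquiv (fun _ : Fin (m+1) => {x // x ∈ P})) (a, g)) j))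
          = w a * ∏ j, w (g j) := by
        rw [Fin.prod_univ_succ]; simp [Fin.consEquiv]
      have hsum : (∑ j, ((((Fin.consEquiv (fun _ : Fin (m+1) => {x // x ∈ P})) (a, g)) j : E)))
          = (a : E) + ∑ j, (g j : E) := by
        rw [Fin.sum_univ_succ]; simp [Fin.consEquiv]
      rw [hprod, hsum]
      have : (a : E) + (∑ j, (g j : E)) - ((m : ℝ) + 1) • z
          = ((∑ j, (g j : E)) - (m : ℝ) • z) + ((a : E) - z) := by
        rw [add_smul, one_smul]; abel
      rw [this, norm_add_sq_real]
    simp_rw [key]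
    rw [Finset.sum_comm]
    have inner_eq : ∀ g : Fin m → {x // x ∈ P},
        ∑ a : {x // x ∈ P}, (w a * ∏ j, w (g j)) *
            (‖(∑ j, (g j : E)) - (m : ℝ) • z‖ ^ 2
              + 2 * ⟪(∑ j, (g j : E)) - (m : ℝ) • z, (a : E) - z⟫
              + ‖(a : E) - z‖ ^ 2)
        = (∏ j, w (g j)) * ‖(∑ j, (g j : E)) - (m : ℝ) • z‖ ^ 2
          + (∏ j, w (g j)) * ∑ i ∈ P, w i * ‖i - z‖ ^ 2 := by
      intro g
      set p := ∏ j, w (g j) with hp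
      set A := (∑ j, (g j : E)) - (m : ℝ) • z with hA
      have step : ∀ a : {x // x ∈ P},
          (w a * p) * (‖A‖ ^ 2 + 2 * ⟪A, (a : E) - z⟫ + ‖(a : E) - z‖ ^ 2)
          = w a * (p * ‖A‖ ^ 2) + (2 * p) * ⟪A, w a • ((a : E) - z)⟫
            + p * (w a * ‖(a : E) - z‖ ^ 2) := by
        intro a
        rw [real_inner_smul_right]
        ring
      rw [Finset.sum_congr rfl fun a _ => step a]
      rw [Finset.sum_add_distrib, Finset.sum_add_distrib, ← Finset.sum_mul,
        ← Finset.mul_sum, ← Finset.mul_sum, ← inner_sum, hcenter, inner_zero_right,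
        mul_zero, add_zero, hsubw, one_mul]
      congr 1
      rw [← P.sum_coe_sort (fun i => w i * ‖i - z‖ ^ 2)]
    rw [Finset.sum_congr rfl fun g _ => inner_eq g, Finset.sum_add_distrib, ih,
      ← Finset.sum_mul, wsum P w hw1, one_mul]
    ring

lemma maurey (P : Finset E) (R : ℝ) (hR : ∀ x ∈ P, ‖x‖ ≤ R) (z : E)
    (hz : z ∈ convexHull ℝ (P : Set E)) (m : ℕ) (hm : 0 < m) :
    ∃ f : Fin m → E, (∀ j, f j ∈ P) ∧ ‖z - ((m : ℝ)⁻¹ • ∑ j, f j)‖ ≤ 2 * R / Real.sqrt m := by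
  -- P nonempty, R ≥ 0, ‖z‖ ≤ R
  obtain ⟨x₀, hx₀⟩ : ∃ x, x ∈ P := by
    by_contra h
    push_neg at h
    have : (P : Set E) = ∅ := Set.eq_empty_iff_forall_notMem.2 (by simpa using h)
    rw [this, convexHull_empty] at hz
    exact hz
  have hR0 : 0 ≤ R := le_trans (norm_nonneg x₀) (hR x₀ hx₀)
  have hzR : ‖z‖ ≤ R := by
    have : convexHull ℝ (P : Set E) ⊆ Metric.closedBall 0 R :=
      convexHull_min (fun x hx => by
        simpa [Metric.mem_closedBall, dist_zero_right] using hR x hx) (convex_closedBall 0 R)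
    simpa [Metric.mem_closedBall, dist_zero_right] using this hz
  rw [Finset.convexHull_eq] at hz
  obtain ⟨w, hw0, hw1, hwz⟩ := hz
  rw [Finset.centerMass, hw1, inv_one, one_smul] at hwz
  have hwz' : ∑ i ∈ P, w i • i = z := by simpa using hwz
  have hV : ∑ i ∈ P, w i * ‖i - z‖ ^ 2 ≤ 4 * R ^ 2 := by
    calc ∑ i ∈ P, w i * ‖i - z‖ ^ 2 ≤ ∑ i ∈ P, w i * (4 * R ^ 2) := by
          refine Finset.sum_le_sum fun i hi => mul_le_mul_of_nonneg_left ?_ (hw0 i hi)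
          have h1 : ‖i - z‖ ≤ 2 * R := by
            calc ‖i - z‖ ≤ ‖i‖ + ‖z‖ := norm_sub_le i z
              _ ≤ R + R := add_le_add (hR i hi) hzR
              _ = 2 * R := by ring
          calc ‖i - z‖ ^ 2 ≤ (2 * R) ^ 2 :=
                pow_le_pow_left₀ (norm_nonneg _) h1 2
            _ = 4 * R ^ 2 := by ring
      _ = 4 * R ^ 2 := by rw [← Finset.sum_mul, hw1, one_mul]
  -- find a good f
  have hexp := maurey_exp P w hw1 z hwz' m
  have hkey : ∃ f : Fin m → {x // x ∈ P},
      ‖(∑ j, (f j : E)) - (m : ℝ) • z‖ ^ 2 ≤ 4 * R ^ 2 * m := by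
    by_contra h
    push_neg at h
    obtain ⟨f₀, hf₀⟩ := Finset.exists_ne_zero_of_sum_ne_zero
      (by rw [wsum P w hw1]; norm_num :
        ∑ f : Fin m → {x // x ∈ P}, ∏ j, w (f j) ≠ 0)
    have hprodnn : ∀ f : Fin m → {x // x ∈ P}, 0 ≤ ∏ j, w (f j) := fun f =>
      Finset.prod_nonneg fun j _ => hw0 _ (f j).2
    have hf₀pos : 0 < ∏ j, w (f₀ j) := lt_of_le_of_ne (hprodnn f₀) (Ne.symm hf₀.2)
    have hlt : 4 * R ^ 2 * m
        < ∑ f : Fin m → {x // x ∈ P}, (∏ j, w (f j)) * ‖(∑ j, (f j : E)) - (m : ℝ) • z‖ ^ 2 := by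
      calc 4 * R ^ 2 * m = ∑ f : Fin m → {x // x ∈ P}, (∏ j, w (f j)) * (4 * R ^ 2 * m) := by
            rw [← Finset.sum_mul, wsum P w hw1, one_mul]
        _ < _ := by
            refine Finset.sum_lt_sum (fun f _ =>
              mul_le_mul_of_nonneg_left (le_of_lt (h f)) (hprodnn f)) ?_
            exact ⟨f₀, Finset.mem_univ _, by
              exact mul_lt_mul_of_pos_left (h f₀) hf₀pos⟩
    rw [hexp] at hlt
    have : (m : ℝ) * ∑ i ∈ P, w i * ‖i - z‖ ^ 2 ≤ (m : ℝ) * (4 * R ^ 2) :=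
      mul_le_mul_of_nonneg_left hV (Nat.cast_nonneg m)
    linarith
  obtain ⟨f, hf⟩ := hkey
  refine ⟨fun j => (f j : E), fun j => (f j).2, ?_⟩
  have hm0 : (0 : ℝ) < m := by exact_mod_cast hm
  have hnorm : ‖(∑ j, (f j : E)) - (m : ℝ) • z‖ ≤ 2 * R * Real.sqrt m := by
    have h1 : ‖(∑ j, (f j : E)) - (m : ℝ) • z‖
        = Real.sqrt (‖(∑ j, (f j : E)) - (m : ℝ) • z‖ ^ 2) :=
      (Real.sqrt_sq (norm_nonneg _)).symm
    rw [h1]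
    calc Real.sqrt (‖(∑ j, (f j : E)) - (m : ℝ) • z‖ ^ 2)
        ≤ Real.sqrt (4 * R ^ 2 * m) := Real.sqrt_le_sqrt hf
      _ = 2 * R * Real.sqrt m := by
          rw [Real.sqrt_mul (by positivity), show (4 : ℝ) * R ^ 2 = (2 * R) ^ 2 by ring,
            Real.sqrt_sq (by positivity)]
  have heq : z - ((m : ℝ)⁻¹ • ∑ j, (f j : E))
      = -((m : ℝ)⁻¹ • ((∑ j, (f j : E)) - (m : ℝ) • z)) := by
    rw [smul_sub, smul_smul, inv_mul_cancel₀ (ne_of_gt hm0), one_smul]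
    abel
  rw [heq, norm_neg, norm_smul, norm_inv, Real.norm_natCast]
  rw [div_eq_inv_mul, ← Real.sqrt_inv]
  calc (m : ℝ)⁻¹ * ‖(∑ j, (f j : E)) - (m : ℝ) • z‖ ≤ (m : ℝ)⁻¹ * (2 * R * Real.sqrt m) :=
        mul_le_mul_of_nonneg_left hnorm (by positivity)
    _ = Real.sqrt (m : ℝ)⁻¹ * (2 * R) := by
        rw [Real.sqrt_inv]
        rw [show (m : ℝ)⁻¹ = (Real.sqrt m)⁻¹ * (Real.sqrt m)⁻¹ by
          rw [← mul_inv]; rw [Real.mul_self_sqrt (le_of_lt hm0)]]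
        field_simp

lemma fact_lb (n : ℕ) : (n : ℝ) ^ n ≤ Real.exp n * (n.factorial : ℝ) := by
  have h : (n : ℝ) ^ n / (n.factorial : ℝ) ≤ Real.exp n := by
    have := Real.sum_le_exp_of_nonneg (x := (n : ℝ)) (Nat.cast_nonneg n) (n + 1)
    refine le_trans ?_ this
    have hmem : n ∈ Finset.range (n + 1) := Finset.self_mem_range_succ n
    have := Finset.single_le_sum (f := fun i => (n : ℝ) ^ i / (i.factorial : ℝ))
      (fun i _ => by positivity) hmem
    simpa using this
  have hfac : (0 : ℝ) < (n.factorial : ℝ) := by exact_mod_cast n.factorial_pos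
  calc (n : ℝ) ^ n = ((n : ℝ) ^ n / (n.factorial : ℝ)) * (n.factorial : ℝ) := by
        field_simp
    _ ≤ Real.exp n * (n.factorial : ℝ) := by
        exact mul_le_mul_of_nonneg_right h hfac.le

lemma gamma_sq_lb (n : ℕ) (hn : 2 ≤ n) :
    ((n : ℝ) / (2 * Real.exp 1)) ^ n ≤ Real.Gamma ((n : ℝ) / 2 + 1) ^ 2 := by
  have hn0 : (0 : ℝ) < n := by positivity
  have hG : 0 < Real.Gamma ((n : ℝ) / 2 + 1) := Real.Gamma_pos_of_pos (by positivity)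
  -- duplication with s = (n+1)/2
  have hdup := Real.Gamma_mul_Gamma_add_half (((n : ℝ) + 1) / 2)
  have h1 : ((n : ℝ) + 1) / 2 + 1 / 2 = (n : ℝ) / 2 + 1 := by ring
  have h2 : 2 * (((n : ℝ) + 1) / 2) = (n : ℝ) + 1 := by ring
  rw [h1, h2] at hdup
  have hfac : Real.Gamma ((n : ℝ) + 1) = (n.factorial : ℝ) := Real.Gamma_nat_eq_factorial n
  have hmono : Real.Gamma (((n : ℝ) + 1) / 2) ≤ Real.Gamma ((n : ℝ) / 2 + 1) := by
    rcases eq_or_lt_of_le hn with h | h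
    · rw [← h]
      norm_num
      exact Real.Gamma_three_div_two_lt_one.le
    · have h3 : (3 : ℕ) ≤ n := h
      have hge : (2 : ℝ) ≤ ((n : ℝ) + 1) / 2 := by
        have : (3 : ℝ) ≤ n := by exact_mod_cast h3
        linarith
      have hge2 : (2 : ℝ) ≤ (n : ℝ) / 2 + 1 := by
        have : (3 : ℝ) ≤ n := by exact_mod_cast h3
        linarith
      exact Real.Gamma_strictMonoOn_Ici.monotoneOn (Set.mem_Ici.2 hge)
        (Set.mem_Ici.2 hge2) (by linarith)
  have hpow : ((2 : ℝ)) ^ ((1 : ℝ) - ((n : ℝ) + 1)) = (2 : ℝ) ^ (-(n:ℝ)) := by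
    rw [show (1 : ℝ) - ((n : ℝ) + 1) = -(n:ℝ) by ring]
  have hGG : (n.factorial : ℝ) * (2 : ℝ) ^ (-(n:ℝ)) * Real.sqrt Real.pi
      ≤ Real.Gamma ((n : ℝ) / 2 + 1) ^ 2 := by
    rw [sq]
    calc (n.factorial : ℝ) * (2 : ℝ) ^ (-(n:ℝ)) * Real.sqrt Real.pi
        = Real.Gamma (((n : ℝ) + 1) / 2) * Real.Gamma ((n : ℝ) / 2 + 1) := by
          rw [hdup, hfac, hpow]
      _ ≤ Real.Gamma ((n : ℝ) / 2 + 1) * Real.Gamma ((n : ℝ) / 2 + 1) :=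
          mul_le_mul_of_nonneg_right hmono hG.le
  have hpi1 : (1 : ℝ) ≤ Real.sqrt Real.pi := by
    rw [show (1 : ℝ) = Real.sqrt 1 by simp]
    exact Real.sqrt_le_sqrt (by linarith [Real.pi_gt_three])
  have h2n : (2 : ℝ) ^ (-(n:ℝ)) = ((2 : ℝ) ^ n)⁻¹ := by
    rw [Real.rpow_neg (by norm_num), Real.rpow_natCast]
  have hmain : ((n : ℝ) / (2 * Real.exp 1)) ^ n ≤ (n.factorial : ℝ) * (2 : ℝ) ^ (-(n:ℝ)) := by
    rw [h2n, div_pow, mul_pow]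
    rw [div_le_iff₀ (by positivity)]
    calc (n : ℝ) ^ n ≤ Real.exp n * (n.factorial : ℝ) := fact_lb n
      _ = (n.factorial : ℝ) * ((2:ℝ) ^ n)⁻¹ * ((2:ℝ) ^ n * Real.exp 1 ^ n) := by
          rw [Real.exp_one_pow]
          field_simp
  calc ((n : ℝ) / (2 * Real.exp 1)) ^ n
      ≤ (n.factorial : ℝ) * (2 : ℝ) ^ (-(n:ℝ)) := hmain
    _ = (n.factorial : ℝ) * (2 : ℝ) ^ (-(n:ℝ)) * 1 := by ring
    _ ≤ (n.factorial : ℝ) * (2 : ℝ) ^ (-(n:ℝ)) * Real.sqrt Real.pi := by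
        refine mul_le_mul_of_nonneg_left hpi1 ?_
        positivity
    _ ≤ _ := hGG


lemma ball_vol (n : ℕ) (hn : 2 ≤ n) (r : ℝ) (hr : 0 ≤ r) :
    volume (Metric.closedBall (0 : EuclideanSpace ℝ (Fin n)) r)
      ≤ ENNReal.ofReal ((r * Real.sqrt (2 * Real.pi * Real.exp 1 / n)) ^ n) := by
  have : Nonempty (Fin n) := ⟨⟨0, by omega⟩⟩
  rw [EuclideanSpace.volume_closedBall]
  rw [Fintype.card_fin]
  rw [← ENNReal.ofReal_pow hr, ← ENNReal.ofReal_mul (by positivity)]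
  refine ENNReal.ofReal_le_ofReal ?_
  have hG : 0 < Real.Gamma ((n : ℝ) / 2 + 1) := Real.Gamma_pos_of_pos (by positivity)
  have hw : Real.sqrt Real.pi ^ n / Real.Gamma ((n : ℝ) / 2 + 1)
      ≤ Real.sqrt (2 * Real.pi * Real.exp 1 / n) ^ n := by
    have hsq : (Real.sqrt Real.pi ^ n / Real.Gamma ((n : ℝ) / 2 + 1)) ^ 2
        ≤ (Real.sqrt (2 * Real.pi * Real.exp 1 / n) ^ n) ^ 2 := by
      have hn0 : (0 : ℝ) < n := by positivity
      have hA : (Real.sqrt Real.pi ^ n) ^ 2 = Real.pi ^ n := by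
        rw [← pow_mul, mul_comm n 2, pow_mul, Real.sq_sqrt Real.pi_pos.le]
      have hB : (Real.sqrt (2 * Real.pi * Real.exp 1 / n) ^ n) ^ 2
          = (2 * Real.pi * Real.exp 1 / n) ^ n := by
        rw [← pow_mul, mul_comm n 2, pow_mul, Real.sq_sqrt (by positivity)]
      rw [div_pow, hA, hB]
      rw [div_le_iff₀ (by positivity)]
      have hg := gamma_sq_lb n hn
      calc Real.pi ^ n = (2 * Real.pi * Real.exp 1 / n) ^ n * ((n:ℝ) / (2 * Real.exp 1)) ^ n := by
            rw [← mul_pow]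
            congr 1
            field_simp
        _ ≤ (2 * Real.pi * Real.exp 1 / n) ^ n * Real.Gamma ((n : ℝ) / 2 + 1) ^ 2 :=
            mul_le_mul_of_nonneg_left hg (by positivity)
    have h1 : (0 : ℝ) ≤ Real.sqrt Real.pi ^ n / Real.Gamma ((n : ℝ) / 2 + 1) := by positivity
    have h2 : (0 : ℝ) ≤ Real.sqrt (2 * Real.pi * Real.exp 1 / n) ^ n := by positivity
    calc Real.sqrt Real.pi ^ n / Real.Gamma ((n : ℝ) / 2 + 1)
        = Real.sqrt ((Real.sqrt Real.pi ^ n / Real.Gamma ((n : ℝ) / 2 + 1)) ^ 2) :=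
          (Real.sqrt_sq h1).symm
      _ ≤ Real.sqrt ((Real.sqrt (2 * Real.pi * Real.exp 1 / n) ^ n) ^ 2) :=
          Real.sqrt_le_sqrt hsq
      _ = _ := Real.sqrt_sq h2
  calc r ^ n * (Real.sqrt Real.pi ^ n / Real.Gamma ((n : ℝ) / 2 + 1))
      ≤ r ^ n * Real.sqrt (2 * Real.pi * Real.exp 1 / n) ^ n :=
        mul_le_mul_of_nonneg_left hw (by positivity)
    _ = (r * Real.sqrt (2 * Real.pi * Real.exp 1 / n)) ^ n := (mul_pow _ _ _).symm

lemma cover_vol (n : ℕ) (P : Finset (EuclideanSpace ℝ (Fin n))) (R : ℝ)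
    (hR : ∀ x ∈ P, ‖x‖ ≤ R) (m : ℕ) (hm : 0 < m) :
    volume (convexHull ℝ (P : Set (EuclideanSpace ℝ (Fin n))))
      ≤ (P.card : ENNReal) ^ m *
        volume (Metric.closedBall (0 : EuclideanSpace ℝ (Fin n)) (2 * R / Real.sqrt m)) := by
  classical
  have hsub : convexHull ℝ (P : Set (EuclideanSpace ℝ (Fin n))) ⊆
      ⋃ g : Fin m → {x // x ∈ P}, Metric.closedBall ((m : ℝ)⁻¹ • ∑ j, (g j : EuclideanSpace ℝ (Fin n))) (2 * R / Real.sqrt m) := by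
    intro z hz
    obtain ⟨f, hfP, hf⟩ := maurey P R hR z hz m hm
    refine Set.mem_iUnion.2 ⟨fun j => ⟨f j, hfP j⟩, ?_⟩
    rw [Metric.mem_closedBall, dist_eq_norm]
    exact hf
  calc volume (convexHull ℝ (P : Set (EuclideanSpace ℝ (Fin n))))
      ≤ ∑ g : Fin m → {x // x ∈ P},
          volume (Metric.closedBall ((m : ℝ)⁻¹ • ∑ j, (g j : EuclideanSpace ℝ (Fin n))) (2 * R / Real.sqrt m)) :=
        le_trans (measure_mono hsub) (measure_iUnion_fintype_le _ _)
    _ = ∑ _g : Fin m → {x // x ∈ P},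
          volume (Metric.closedBall (0 : EuclideanSpace ℝ (Fin n)) (2 * R / Real.sqrt m)) := by
        refine Finset.sum_congr rfl fun g _ => ?_
        exact Measure.addHaar_closedBall_center volume _ _
    _ = (P.card : ENNReal) ^ m * volume (Metric.closedBall (0 : EuclideanSpace ℝ (Fin n)) (2 * R / Real.sqrt m)) := by
        rw [Finset.sum_const, Finset.card_univ, Fintype.card_fun, Fintype.card_coe,
          Fintype.card_fin, nsmul_eq_mul, Nat.cast_pow]

lemma pow_rpow_cancel {Y : ℝ} (hY : 0 ≤ Y) {n : ℕ} (hn : n ≠ 0) :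
    (Y ^ n) ^ ((1 : ℝ) / n) = Y := by
  rw [← Real.rpow_natCast Y n, ← Real.rpow_mul hY, mul_one_div, div_self (by exact_mod_cast hn),
    Real.rpow_one]

lemma main_bound (n : ℕ) (hn : 2 ≤ n) (m : ℕ) (hm : 0 < m)
    (P : Finset (EuclideanSpace ℝ (Fin n))) (hP : ∀ x ∈ P, ‖x‖ ≤ (n : ℝ)) :
    (volume (convexHull ℝ (P : Set (EuclideanSpace ℝ (Fin n))))).toReal ^ ((1 : ℝ) / n)
      ≤ ((P.card : ℝ) ^ m) ^ ((1 : ℝ) / n)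
        * (2 * n / Real.sqrt m * Real.sqrt (2 * Real.pi * Real.exp 1 / n)) := by
  set Y : ℝ := 2 * n / Real.sqrt m * Real.sqrt (2 * Real.pi * Real.exp 1 / n) with hYdef
  have hY : 0 ≤ Y := by positivity
  have hr : (0 : ℝ) ≤ 2 * n / Real.sqrt m := by positivity
  have h1 : volume (convexHull ℝ (P : Set (EuclideanSpace ℝ (Fin n))))
      ≤ (P.card : ENNReal) ^ m * ENNReal.ofReal (Y ^ n) :=
    le_trans (cover_vol n P n hP m hm)
      (mul_le_mul_right (le_trans (ball_vol n hn _ hr) (le_of_eq rfl)) _)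
  have h2 : (volume (convexHull ℝ (P : Set (EuclideanSpace ℝ (Fin n))))).toReal
      ≤ (P.card : ℝ) ^ m * Y ^ n := by
    have hfin : ((P.card : ENNReal) ^ m * ENNReal.ofReal (Y ^ n)) ≠ ⊤ := by
      refine ENNReal.mul_ne_top ?_ ENNReal.ofReal_ne_top
      exact ENNReal.pow_ne_top (ENNReal.natCast_ne_top _)
    have := ENNReal.toReal_mono hfin h1
    rwa [ENNReal.toReal_mul, ENNReal.toReal_pow, ENNReal.toReal_natCast,
      ENNReal.toReal_ofReal (by positivity)] at this
  have hn0 : (n : ℕ) ≠ 0 := by omega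
  calc (volume (convexHull ℝ (P : Set (EuclideanSpace ℝ (Fin n))))).toReal ^ ((1 : ℝ) / n)
      ≤ ((P.card : ℝ) ^ m * Y ^ n) ^ ((1 : ℝ) / n) :=
        Real.rpow_le_rpow ENNReal.toReal_nonneg h2 (by positivity)
    _ = ((P.card : ℝ) ^ m) ^ ((1 : ℝ) / n) * (Y ^ n) ^ ((1 : ℝ) / n) :=
        Real.mul_rpow (by positivity) (by positivity)
    _ = ((P.card : ℝ) ^ m) ^ ((1 : ℝ) / n) * Y := by rw [pow_rpow_cancel hY hn0]

set_option maxHeartbeats 1000000 in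
/-- For every finite set `P ⊆ ℝⁿ` of at most `n^{k/2+5}` points of norm at most `n`,
the convex hull `K = conv(P)` satisfies `vol(K)^{1/n} ≤ c √(k log n)`. -/
theorem stmt_9 :
    ∃ c : ℝ, 0 < c ∧ ∀ n : ℕ, 2 ≤ n → ∀ k : ℕ, 1 ≤ k → k ≤ n - 1 →
      ∀ P : Finset (EuclideanSpace ℝ (Fin n)),
        (∀ x ∈ P, ‖x‖ ≤ (n : ℝ)) → (P.card : ℝ) ≤ (n : ℝ) ^ ((k : ℝ) / 2 + 5) →
        (volume (convexHull ℝ (P : Set (EuclideanSpace ℝ (Fin n))))).toReal ^ ((1 : ℝ) / n)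
          ≤ c * Real.sqrt (k * Real.log n) := by
  refine ⟨200, by norm_num, fun n hn k hk1 hkn P hP hcard => ?_⟩
  have hn0 : (0 : ℝ) < n := by positivity
  have hn1 : (1 : ℝ) < n := by exact_mod_cast hn
  have hlog : 0 < Real.log n := Real.log_pos hn1
  have hk1' : (1 : ℝ) ≤ k := by exact_mod_cast hk1
  set L : ℝ := ((k : ℝ) / 2 + 5) * Real.log n with hLdef
  have hL0 : (0 : ℝ) < L := by positivity
  have hcard' : (P.card : ℝ) ≤ Real.exp L := by
    rwa [Real.rpow_def_of_pos hn0, mul_comm (Real.log (n:ℝ))] at hcard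
  have hLk : L ≤ 6 * ((k : ℝ) * Real.log n) := by
    have h6 : (k : ℝ) / 2 + 5 ≤ 6 * k := by linarith
    calc L = ((k : ℝ) / 2 + 5) * Real.log n := hLdef
      _ ≤ 6 * (k : ℝ) * Real.log n := mul_le_mul_of_nonneg_right h6 hlog.le
      _ = 6 * ((k : ℝ) * Real.log n) := by ring
  have hklog : (0 : ℝ) ≤ (k : ℝ) * Real.log n := by positivity
  -- a uniform intermediate bound
  have key : (volume (convexHull ℝ (P : Set (EuclideanSpace ℝ (Fin n))))).toReal ^ ((1 : ℝ) / n)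
      ≤ Real.exp 2 * Real.sqrt (8 * Real.pi * Real.exp 1 * L) := by
    rcases le_or_gt L n with hLn | hnL
    · -- case L ≤ n : Maurey covering with m = ⌈n/L⌉
      set m : ℕ := ⌈(n : ℝ) / L⌉₊ with hmdef
      have hx1 : (1 : ℝ) ≤ (n : ℝ) / L := (one_le_div hL0).2 hLn
      have hm : 0 < m := by
        rw [hmdef]
        exact Nat.ceil_pos.2 (by linarith)
      have hm0 : (0 : ℝ) < m := by exact_mod_cast hm
      have hmlb : (n : ℝ) / L ≤ m := Nat.le_ceil _
      have hmub : (m : ℝ) ≤ (n : ℝ) / L + 1 := (Nat.ceil_lt_add_one (by positivity)).le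
      have hmb := main_bound n hn m hm P hP
      set Y : ℝ := 2 * n / Real.sqrt m * Real.sqrt (2 * Real.pi * Real.exp 1 / n) with hYdef
      have hY : 0 ≤ Y := by positivity
      -- bound the count factor
      have hcount : ((P.card : ℝ) ^ m) ^ ((1 : ℝ) / n) ≤ Real.exp 2 := by
        have hNm : (P.card : ℝ) ^ m ≤ Real.exp L ^ m :=
          pow_le_pow_left₀ (Nat.cast_nonneg _) hcard' m
        have h1 : ((P.card : ℝ) ^ m) ^ ((1 : ℝ) / n) ≤ (Real.exp L ^ m) ^ ((1 : ℝ) / n) :=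
          Real.rpow_le_rpow (by positivity) hNm (by positivity)
        refine le_trans h1 ?_
        have h2 : (Real.exp L ^ m : ℝ) = Real.exp (L * m) := by
          rw [← Real.exp_nat_mul]
          ring_nf
        rw [h2, ← Real.exp_mul]
        refine Real.exp_le_exp.2 ?_
        rw [mul_one_div, div_le_iff₀ hn0]
        have : L * (m : ℝ) ≤ L * ((n : ℝ) / L + 1) := mul_le_mul_of_nonneg_left hmub hL0.le
        calc L * (m : ℝ) ≤ L * ((n : ℝ) / L + 1) := this
          _ = (n : ℝ) + L := by field_simp
          _ ≤ 2 * n := by linarith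
      -- bound Y
      have hYb : Y ≤ Real.sqrt (8 * Real.pi * Real.exp 1 * L) := by
        have hY2 : Y ^ 2 = 8 * Real.pi * Real.exp 1 * ((n : ℝ) / m) := by
          rw [hYdef, mul_pow, div_pow, Real.sq_sqrt (Nat.cast_nonneg m : (0:ℝ) ≤ m),
            Real.sq_sqrt (by positivity : (0:ℝ) ≤ 2 * Real.pi * Real.exp 1 / n)]
          field_simp
          ring
        have hnm : (n : ℝ) / m ≤ L := by
          rw [div_le_iff₀ hm0]
          calc (n : ℝ) = L * ((n : ℝ) / L) := by field_simp
            _ ≤ L * m := mul_le_mul_of_nonneg_left hmlb hL0.le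
        have hY2' : Y ^ 2 ≤ 8 * Real.pi * Real.exp 1 * L := by
          rw [hY2]
          exact mul_le_mul_of_nonneg_left hnm (by positivity)
        calc Y = Real.sqrt (Y ^ 2) := (Real.sqrt_sq hY).symm
          _ ≤ _ := Real.sqrt_le_sqrt hY2'
      calc (volume (convexHull ℝ (P : Set (EuclideanSpace ℝ (Fin n))))).toReal ^ ((1 : ℝ) / n)
          ≤ ((P.card : ℝ) ^ m) ^ ((1 : ℝ) / n) * Y := hmb
        _ ≤ Real.exp 2 * Real.sqrt (8 * Real.pi * Real.exp 1 * L) :=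
            mul_le_mul hcount hYb hY (by positivity)
    · -- case n < L : trivial ball bound
      have hsub : convexHull ℝ (P : Set (EuclideanSpace ℝ (Fin n)))
          ⊆ Metric.closedBall 0 (n : ℝ) :=
        convexHull_min (fun x hx => by
          simpa [Metric.mem_closedBall, dist_zero_right] using hP x hx)
          (convex_closedBall 0 (n : ℝ))
      set Z : ℝ := (n : ℝ) * Real.sqrt (2 * Real.pi * Real.exp 1 / n) with hZdef
      have hZ : 0 ≤ Z := by positivity
      have h1 : (volume (convexHull ℝ (P : Set (EuclideanSpace ℝ (Fin n))))).toReal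
          ≤ Z ^ n := by
        have := le_trans (measure_mono hsub) (ball_vol n hn (n : ℝ) hn0.le)
        have h2 := ENNReal.toReal_mono ENNReal.ofReal_ne_top this
        rwa [ENNReal.toReal_ofReal (by positivity)] at h2
      have hn0' : (n : ℕ) ≠ 0 := by omega
      have h3 : (volume (convexHull ℝ (P : Set (EuclideanSpace ℝ (Fin n))))).toReal ^ ((1:ℝ)/n)
          ≤ Z := by
        calc (volume (convexHull ℝ (P : Set (EuclideanSpace ℝ (Fin n))))).toReal ^ ((1:ℝ)/n)
            ≤ (Z ^ n) ^ ((1:ℝ)/n) := Real.rpow_le_rpow ENNReal.toReal_nonneg h1 (by positivity)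
          _ = Z := pow_rpow_cancel hZ hn0'
      refine le_trans h3 ?_
      have hZb : Z ≤ Real.sqrt (8 * Real.pi * Real.exp 1 * L) := by
        have hZ2 : Z ^ 2 = 2 * Real.pi * Real.exp 1 * (n : ℝ) := by
          rw [hZdef, mul_pow, Real.sq_sqrt (by positivity : (0:ℝ) ≤ 2 * Real.pi * Real.exp 1 / n)]
          field_simp
        have hZ2' : Z ^ 2 ≤ 8 * Real.pi * Real.exp 1 * L := by
          rw [hZ2]
          nlinarith [Real.pi_pos, Real.exp_pos 1, hnL, hL0]
        calc Z = Real.sqrt (Z ^ 2) := (Real.sqrt_sq hZ).symm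
          _ ≤ _ := Real.sqrt_le_sqrt hZ2'
      calc Z ≤ Real.sqrt (8 * Real.pi * Real.exp 1 * L) := hZb
        _ ≤ Real.exp 2 * Real.sqrt (8 * Real.pi * Real.exp 1 * L) := by
            nlinarith [Real.sqrt_nonneg (8 * Real.pi * Real.exp 1 * L),
              Real.one_le_exp (by norm_num : (0:ℝ) ≤ 2)]
  -- numeric conclusion
  refine le_trans key ?_
  have hexp2 : Real.exp 2 ≤ 8 := by
    have h := Real.exp_one_lt_d9
    have : Real.exp 2 = Real.exp 1 * Real.exp 1 := by
      rw [← Real.exp_add]; norm_num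
    nlinarith [Real.exp_pos 1]
  have hsqrt : Real.sqrt (8 * Real.pi * Real.exp 1 * L)
      ≤ Real.sqrt (576 * ((k : ℝ) * Real.log n)) := by
    refine Real.sqrt_le_sqrt ?_
    have hpi : Real.pi ≤ 4 := Real.pi_le_four
    have he : Real.exp 1 ≤ 3 := by
      have := Real.exp_one_lt_d9
      linarith
    calc 8 * Real.pi * Real.exp 1 * L ≤ 8 * Real.pi * Real.exp 1 * (6 * ((k : ℝ) * Real.log n)) :=
          mul_le_mul_of_nonneg_left hLk (by positivity)
      _ = 48 * (Real.pi * Real.exp 1) * ((k : ℝ) * Real.log n) := by ring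
      _ ≤ 48 * (4 * 3) * ((k : ℝ) * Real.log n) := by
          refine mul_le_mul_of_nonneg_right ?_ hklog
          have hpipos := Real.pi_pos
          nlinarith [Real.exp_pos 1]
      _ = 576 * ((k : ℝ) * Real.log n) := by ring
  have h576 : Real.sqrt (576 * ((k : ℝ) * Real.log n)) = 24 * Real.sqrt ((k : ℝ) * Real.log n) := by
    rw [Real.sqrt_mul (by norm_num : (0:ℝ) ≤ 576), show (576:ℝ) = 24^2 by norm_num,
      Real.sqrt_sq (by norm_num : (0:ℝ) ≤ 24)]
  calc Real.exp 2 * Real.sqrt (8 * Real.pi * Real.exp 1 * L)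
      ≤ 8 * (24 * Real.sqrt ((k : ℝ) * Real.log n)) := by
        rw [← h576]
        exact mul_le_mul hexp2 hsqrt (Real.sqrt_nonneg _) (by norm_num)
    _ ≤ 200 * Real.sqrt ((k : ℝ) * Real.log n) := by
        nlinarith [Real.sqrt_nonneg ((k : ℝ) * Real.log n)]
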